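/- Let X be a Hausdorff topological space. Then X × Y is weakly first countable for every metrizable topological space Y if and only if X × Y is weakly first countable for every metrizable topological space Y with at most one non-isolated point. -/

import Mathlib

open Filter Topology

/-- A weak base for a topological space: a family of filter bases `B x` with
`x` in every member, such that a set is open iff it absorbs a member of `B x`
at each of its points. -/
def IsWeakBase {X : Type*} [TopologicalSpace X] (B : X → Set (Set X)) : Prop :=
  (∀ x, (B x).Nonempty) ∧
  (∀ x, ∀ V₁ ∈ B x, ∀ V₂ ∈ B x, ∃ W ∈ B x, W ⊆ V₁ ∩ V₂) ∧
  (∀ x, ∀ V ∈ B x, x ∈ V) ∧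
  (∀ U : Set X, IsOpen U ↔ ∀ x ∈ U, ∃ V ∈ B x, V ⊆ U)

/-- A topological space is weakly first countable if it has a weak base with
`B x` countable for every `x`. -/
def WeaklyFirstCountable (X : Type*) [TopologicalSpace X] : Prop :=
  ∃ B : X → Set (Set X), IsWeakBase B ∧ ∀ x, (B x).Countable

universe u

section WB
variable {Z : Type*} [TopologicalSpace Z] {B : Z → Set (Set Z)}

lemma wb_chain (hB : IsWeakBase B) (hc : ∀ z, (B z).Countable) (z : Z) :
    ∃ W : ℕ → Set Z, (∀ n, W n ∈ B z) ∧ (∀ m n, m ≤ n → W n ⊆ W m) ∧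
      (∀ V ∈ B z, ∃ k, W k ⊆ V) := by
  classical
  obtain ⟨f, hf⟩ := Set.Countable.exists_eq_range (hc z) (hB.1 z)
  have hfm : ∀ n, f n ∈ B z := fun n => hf ▸ Set.mem_range_self n
  choose! g hg1 hg2 using hB.2.1 z
  let W : ℕ → Set Z := fun n => Nat.rec (f 0) (fun n Wn => g Wn (f (n + 1))) n
  have hW0 : W 0 = f 0 := rfl
  have hWs : ∀ n, W (n + 1) = g (W n) (f (n + 1)) := fun n => rfl
  have hmem : ∀ n, W n ∈ B z := by
    intro n
    induction n with
    | zero => exact hfm 0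
    | succ n ih => rw [hWs n]; exact hg1 (W n) ih (f (n + 1)) (hfm (n + 1))
  have hstep : ∀ n, W (n + 1) ⊆ W n ∩ f (n + 1) := by
    intro n; rw [hWs n]; exact hg2 (W n) (hmem n) (f (n + 1)) (hfm (n + 1))
  have hanti : ∀ m n, m ≤ n → W n ⊆ W m := by
    intro m n h
    induction n with
    | zero => rw [Nat.le_zero.1 h]
    | succ n ih =>
      rcases Nat.lt_or_ge m (n + 1) with h' | h'
      · exact ((hstep n).trans Set.inter_subset_left).trans (ih (Nat.lt_succ_iff.1 h'))
      · rw [Nat.le_antisymm h h']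
  refine ⟨W, hmem, hanti, ?_⟩
  intro V hV
  rw [hf] at hV
  obtain ⟨k, rfl⟩ := hV
  cases k with
  | zero => exact ⟨0, subset_of_eq hW0⟩
  | succ k => exact ⟨k + 1, (hstep k).trans Set.inter_subset_right⟩

lemma wb_approx (hB : IsWeakBase B) (hc : ∀ z, (B z).Countable) (z : Z) (U : Set Z)
    (h : ∀ V ∈ B z, ¬V ⊆ U) :
    ∃ g : ℕ → Z, (∀ n, g n ∉ U) ∧ Tendsto g atTop (𝓝 z) := by
  obtain ⟨W, hW1, hW2, hW3⟩ := wb_chain hB hc z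
  have hex : ∀ n, ∃ p, p ∈ W n ∧ p ∉ U := by
    intro n
    obtain ⟨p, hp1, hp2⟩ := Set.not_subset.1 (h (W n) (hW1 n))
    exact ⟨p, hp1, hp2⟩
  choose g hg1 hg2 using hex
  refine ⟨g, hg2, ?_⟩
  rw [tendsto_nhds]
  intro O hO hzO
  obtain ⟨V, hV, hVO⟩ := (hB.2.2.2 O).1 hO z hzO
  obtain ⟨k, hk⟩ := hW3 V hV
  filter_upwards [Filter.eventually_ge_atTop k] with n hn
  exact hVO (hk (hW2 k n hn (hg1 n)))

lemma wb_isOpen (hB : IsWeakBase B) (hc : ∀ z, (B z).Countable) (U : Set Z)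
    (hU : ∀ z ∈ U, ∀ g : ℕ → Z, Tendsto g atTop (𝓝 z) → ∃ n, g n ∈ U) : IsOpen U := by
  rw [hB.2.2.2]
  intro z hz
  by_contra hcon
  push_neg at hcon
  obtain ⟨g, hg1, hg2⟩ := wb_approx hB hc z U fun V hV => hcon V hV
  obtain ⟨n, hn⟩ := hU z hz g hg2
  exact hg1 n hn

lemma wb_seq_nbhd [T2Space Z] (hB : IsWeakBase B) (hc : ∀ z, (B z).Countable) {z : Z}
    {V : Set Z} (hV : V ∈ B z) {g : ℕ → Z} (hg : Tendsto g atTop (𝓝 z)) :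
    ∀ᶠ n in atTop, g n ∈ V := by
  classical
  by_contra hcon
  rw [Filter.not_eventually] at hcon
  obtain ⟨φ, hφmono, hφ⟩ := Filter.extraction_of_frequently_atTop hcon
  set g' : ℕ → Z := g ∘ φ with hg'def
  have hg'z : Tendsto g' atTop (𝓝 z) := hg.comp hφmono.tendsto_atTop
  have hg'V : ∀ n, g' n ∉ V := hφ
  set D : Set Z := Set.range g' with hDdef
  have hzD : z ∈ Dᶜ := by
    rintro ⟨i, hi⟩
    exact hg'V i (hi.symm ▸ hB.2.2.1 z V hV)
  have hnotopen : ¬IsOpen Dᶜ := by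
    intro hop
    have hev : ∀ᶠ n in atTop, g' n ∈ Dᶜ := hg'z (hop.mem_nhds hzD)
    obtain ⟨n, hn⟩ := hev.exists
    exact hn ⟨n, rfl⟩
  rw [hB.2.2.2] at hnotopen
  push_neg at hnotopen
  obtain ⟨p, hpD, hp⟩ := hnotopen
  obtain ⟨d, hd1, hd2⟩ := wb_approx hB hc p Dᶜ fun W hW => hp W hW
  have hdD : ∀ n, d n ∈ D := fun n => Set.not_notMem.1 (hd1 n)
  by_cases hcst : ∃ v, ∃ᶠ k in atTop, d k = v
  · obtain ⟨v, hv⟩ := hcst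
    have hpv : p ∈ closure ({v} : Set Z) :=
      mem_closure_of_frequently_of_tendsto (hv.mono fun k hk => by simp [hk]) hd2
    rw [isClosed_singleton.closure_eq, Set.mem_singleton_iff] at hpv
    obtain ⟨k, hk⟩ := hv.exists
    exact hpD (hpv ▸ hk ▸ hdD k)
  · push_neg at hcst
    simp only [ne_eq] at hcst
    choose mfun hm using hdD
    have hmtop : Tendsto mfun atTop atTop := by
      rw [tendsto_atTop]
      intro b
      have hev : ∀ᶠ k in atTop, ∀ j ∈ Finset.range b, ¬d k = g' j :=
        (Filter.eventually_all_finset (Finset.range b)).2 fun j _ => hcst (g' j)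
      filter_upwards [hev] with k hk
      by_contra hlt
      exact hk (mfun k) (Finset.mem_range.2 (Nat.lt_of_not_le hlt)) (hm k).symm
    have hdz : Tendsto d atTop (𝓝 z) := by
      have := hg'z.comp hmtop
      refine this.congr fun k => hm k
    have hpz : p = z := tendsto_nhds_unique hd2 hdz
    refine hp V (hpz ▸ hV) ?_
    rintro x hx ⟨i, rfl⟩
    exact hg'V i hx

end WB


section Prime
variable {Y : Type*}

noncomputable def pdist (m : MetricSpace Y) (y₀ : Y) (a b : Y) : ℝ :=
  letI := m
  letI := Classical.decEq Y
  if a = b then 0 else dist a y₀ + dist b y₀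

lemma pdist_pos_eq (m : MetricSpace Y) (y₀ : Y) {a b : Y} (h : ¬ a = b) :
    letI := m
    pdist m y₀ a b = dist a y₀ + dist b y₀ := by
  letI := m
  unfold pdist
  rw [if_neg h]

lemma pdist_self_eq (m : MetricSpace Y) (y₀ a : Y) : pdist m y₀ a a = 0 := by
  letI := m
  unfold pdist
  rw [if_pos rfl]

lemma pdist_nonneg (m : MetricSpace Y) (y₀ a b : Y) : 0 ≤ pdist m y₀ a b := by
  letI := m
  by_cases h : a = b
  · rw [h, pdist_self_eq]
  · rw [pdist_pos_eq m y₀ h]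
    have h1 : (0:ℝ) ≤ dist a y₀ := dist_nonneg
    have h2 : (0:ℝ) ≤ dist b y₀ := dist_nonneg
    linarith

lemma pdist_comm (m : MetricSpace Y) (y₀ a b : Y) : pdist m y₀ a b = pdist m y₀ b a := by
  letI := m
  by_cases h : a = b
  · rw [h]
  · rw [pdist_pos_eq m y₀ h, pdist_pos_eq m y₀ (Ne.symm h), add_comm]

lemma pdist_triangle (m : MetricSpace Y) (y₀ a b c : Y) :
    pdist m y₀ a c ≤ pdist m y₀ a b + pdist m y₀ b c := by
  letI := m
  have hb0 : (0:ℝ) ≤ dist b y₀ := dist_nonneg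
  by_cases hac : a = c
  · rw [hac, pdist_self_eq]
    have h1 : (0:ℝ) ≤ pdist m y₀ c b := pdist_nonneg m y₀ c b
    have h2 : (0:ℝ) ≤ pdist m y₀ b c := pdist_nonneg m y₀ b c
    have h3 : (0:ℝ) ≤ pdist m y₀ a b := pdist_nonneg m y₀ a b
    linarith
  · rw [pdist_pos_eq m y₀ hac]
    by_cases hab : a = b
    · rw [hab, pdist_self_eq, zero_add, pdist_pos_eq m y₀ (hab ▸ hac)]
    · by_cases hbc : b = c
      · rw [hbc, pdist_self_eq, add_zero, pdist_pos_eq m y₀ (hbc ▸ hac)]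
      · rw [pdist_pos_eq m y₀ hab, pdist_pos_eq m y₀ hbc]
        linarith

lemma pdist_eq_zero (m : MetricSpace Y) (y₀ : Y) {a b : Y} (h : pdist m y₀ a b = 0) :
    a = b := by
  letI := m
  by_cases hab : a = b
  · exact hab
  · exfalso
    rw [pdist_pos_eq m y₀ hab] at h
    have h3 : (0:ℝ) ≤ dist a y₀ := dist_nonneg
    have h4 : (0:ℝ) ≤ dist b y₀ := dist_nonneg
    have h1 : dist a y₀ = 0 := by linarith
    have h2 : dist b y₀ = 0 := by linarith
    rw [dist_eq_zero] at h1 h2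
    exact hab (h1.trans h2.symm)

/-- The prime metric at `y₀`: all points other than `y₀` become isolated. -/
noncomputable def primeMetric (m : MetricSpace Y) (y₀ : Y) : MetricSpace Y where
  dist := pdist m y₀
  dist_self := pdist_self_eq m y₀
  dist_comm := pdist_comm m y₀
  dist_triangle := pdist_triangle m y₀
  eq_of_dist_eq_zero := fun h => pdist_eq_zero m y₀ h

/-- The topology of a metric space structure. -/
abbrev mtop (m : MetricSpace Y) : TopologicalSpace Y :=
  m.toPseudoMetricSpace.toUniformSpace.toTopologicalSpace

lemma primeMetric_dist (m : MetricSpace Y) (y₀ a b : Y) :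
    @dist Y (primeMetric m y₀).toDist a b = pdist m y₀ a b := rfl

lemma primeMetric_le (m : MetricSpace Y) (y₀ : Y) :
    mtop (primeMetric m y₀) ≤ mtop m := by
  letI := m
  rw [TopologicalSpace.le_def]
  intro U hU
  rw [@Metric.isOpen_iff Y (primeMetric m y₀).toPseudoMetricSpace]
  intro x hx
  obtain ⟨ε, hε, hball⟩ := (@Metric.isOpen_iff Y m.toPseudoMetricSpace U).1 hU x hx
  refine ⟨ε, hε, ?_⟩
  intro b hb
  rw [@Metric.mem_ball Y (primeMetric m y₀).toPseudoMetricSpace, primeMetric_dist] at hb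
  apply hball
  rw [@Metric.mem_ball Y m.toPseudoMetricSpace]
  by_cases hbx : b = x
  · rw [hbx, dist_self]
    exact hε
  · rw [pdist_pos_eq m y₀ hbx] at hb
    calc dist b x ≤ dist b y₀ + dist y₀ x := dist_triangle b y₀ x
    _ = dist b y₀ + dist x y₀ := by rw [dist_comm y₀ x]
    _ < ε := hb

lemma primeMetric_nhds_center (m : MetricSpace Y) (y₀ : Y) :
    @nhds Y (mtop (primeMetric m y₀)) y₀ = @nhds Y (mtop m) y₀ := by
  letI := m
  have hball : ∀ ε : ℝ, @Metric.ball Y (primeMetric m y₀).toPseudoMetricSpace y₀ ε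
      = @Metric.ball Y m.toPseudoMetricSpace y₀ ε := by
    intro ε
    ext b
    rw [@Metric.mem_ball Y (primeMetric m y₀).toPseudoMetricSpace,
      @Metric.mem_ball Y m.toPseudoMetricSpace, primeMetric_dist]
    by_cases hb : b = y₀
    · rw [hb, pdist_self_eq, dist_self]
    · rw [pdist_pos_eq m y₀ hb, dist_self, add_zero]
  apply Filter.ext
  intro s
  rw [@Metric.mem_nhds_iff Y (primeMetric m y₀).toPseudoMetricSpace,
    @Metric.mem_nhds_iff Y m.toPseudoMetricSpace]
  constructor
  · rintro ⟨ε, hε, h⟩; exact ⟨ε, hε, (hball ε) ▸ h⟩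
  · rintro ⟨ε, hε, h⟩; exact ⟨ε, hε, (hball ε).symm ▸ h⟩

lemma primeMetric_isolated (m : MetricSpace Y) {y₀ a : Y} (h : a ≠ y₀) :
    @IsOpen Y (mtop (primeMetric m y₀)) {a} := by
  letI := m
  rw [@Metric.isOpen_singleton_iff Y (primeMetric m y₀).toPseudoMetricSpace]
  refine ⟨dist a y₀, dist_pos.2 h, ?_⟩
  intro b hb
  rw [primeMetric_dist] at hb
  by_contra hba
  rw [pdist_pos_eq m y₀ hba] at hb
  have : (0:ℝ) ≤ dist b y₀ := dist_nonneg
  linarith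

lemma primeMetric_t2 (m : MetricSpace Y) (y₀ : Y) :
    @T2Space Y (mtop (primeMetric m y₀)) := by
  letI := primeMetric m y₀
  exact inferInstance

end Prime



theorem key_lemma {X : Type u} [tX : TopologicalSpace X] [T2Space X] {Y : Type u}
    (m₀ : Unit → MetricSpace Y)
    (h : ∀ (t : TopologicalSpace Y), @TopologicalSpace.MetrizableSpace Y t →
        (@Set.Subsingleton Y {y : Y | ¬ @IsOpen Y t {y}}) →
        @WeaklyFirstCountable (X × Y) (@instTopologicalSpaceProd X Y tX t)) :
    @WeaklyFirstCountable (X × Y) (@instTopologicalSpaceProd X Y tX (mtop (m₀ ()))) := by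
  classical
  have hmet : ∀ y₀ : Y, @TopologicalSpace.MetrizableSpace Y (mtop (primeMetric (m₀ ()) y₀)) :=
    fun y₀ => by letI := primeMetric (m₀ ()) y₀; exact inferInstance
  have hsub : ∀ y₀ : Y, @Set.Subsingleton Y {y : Y | ¬ @IsOpen Y (mtop (primeMetric (m₀ ()) y₀)) {y}} := by
    intro y₀ a ha b hb
    have hkey : ∀ c, ¬ @IsOpen Y (mtop (primeMetric (m₀ ()) y₀)) {c} → c = y₀ := by
      intro c hc
      by_contra hne
      exact hc (primeMetric_isolated (m₀ ()) hne)
    rw [hkey a ha, hkey b hb]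
  have hwfc := fun y₀ => h (mtop (primeMetric (m₀ ()) y₀)) (hmet y₀) (hsub y₀)
  choose C hC hCc using hwfc
  have ht2 : ∀ y₀ : Y,
      @T2Space (X × Y) (@instTopologicalSpaceProd X Y tX (mtop (primeMetric (m₀ ()) y₀))) := by
    intro y₀
    haveI := primeMetric_t2 (m₀ ()) y₀
    exact @Prod.t2Space X Y tX ‹T2Space X› (mtop (primeMetric (m₀ ()) y₀)) ‹_›
  have hconv : ∀ (y₀ : Y) (q : X × Y) (g : ℕ → X × Y),
      Filter.Tendsto g Filter.atTop
        (@nhds (X × Y) (@instTopologicalSpaceProd X Y tX (mtop (primeMetric (m₀ ()) y₀))) q) →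
      Filter.Tendsto g Filter.atTop
        (@nhds (X × Y) (@instTopologicalSpaceProd X Y tX (mtop (primeMetric (m₀ ()) q.2))) q) := by
    rintro y₀ ⟨x, y⟩ g hg
    rw [@nhds_prod_eq X Y tX (mtop (primeMetric (m₀ ()) y₀)), Filter.tendsto_prod_iff'] at hg
    rw [@nhds_prod_eq X Y tX (mtop (primeMetric (m₀ ()) y)), Filter.tendsto_prod_iff']
    refine ⟨hg.1, ?_⟩
    by_cases hy : y = y₀
    · subst hy; exact hg.2
    · have hiso : @IsOpen Y (mtop (primeMetric (m₀ ()) y₀)) {y} := primeMetric_isolated (m₀ ()) hy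
      have hev : ∀ᶠ n in atTop, (g n).2 ∈ ({y} : Set Y) := by
        letI : TopologicalSpace Y := mtop (primeMetric (m₀ ()) y₀)
        exact hg.2 (hiso.mem_nhds rfl)
      have hcst : Filter.Tendsto (fun _ : ℕ => y) Filter.atTop
          (@nhds Y (mtop (primeMetric (m₀ ()) y)) y) := by
        letI : TopologicalSpace Y := mtop (primeMetric (m₀ ()) y)
        exact tendsto_const_nhds
      exact Filter.Tendsto.congr' (hev.mono fun n hn => (Set.mem_singleton_iff.1 hn).symm) hcst
  have hnds : ∀ q : X × Y,
      @nhds (X × Y) (@instTopologicalSpaceProd X Y tX (mtop (primeMetric (m₀ ()) q.2))) q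
        = @nhds (X × Y) (@instTopologicalSpaceProd X Y tX (mtop (m₀ ()))) q := by
    rintro ⟨x, y⟩
    rw [@nhds_prod_eq X Y tX (mtop (primeMetric (m₀ ()) y)), @nhds_prod_eq X Y tX (mtop (m₀ ()))]
    rw [primeMetric_nhds_center (m₀ ()) y]
  have hle : ∀ y₀ : Y, @instTopologicalSpaceProd X Y tX (mtop (primeMetric (m₀ ()) y₀))
      ≤ @instTopologicalSpaceProd X Y tX (mtop (m₀ ())) := by
    intro y₀
    simp only [instTopologicalSpaceProd]
    exact inf_le_inf le_rfl (induced_mono (primeMetric_le (m₀ ()) y₀))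
  refine ⟨fun q => C q.2 q, ⟨?_, ?_, ?_, ?_⟩, fun q => hCc q.2 q⟩
  · exact fun q => (hC q.2).1 q
  · exact fun q => (hC q.2).2.1 q
  · exact fun q => (hC q.2).2.2.1 q
  · intro U
    constructor
    · intro hU q hq
      have h1 : @IsOpen (X × Y)
          (@instTopologicalSpaceProd X Y tX (mtop (primeMetric (m₀ ()) q.2))) U :=
        hU.mono (hle q.2)
      exact ((hC q.2).2.2.2 U).1 h1 q hq
    · intro habs
      have hopen : ∀ y₀ : Y,
          @IsOpen (X × Y) (@instTopologicalSpaceProd X Y tX (mtop (primeMetric (m₀ ()) y₀))) U := by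
        intro y₀
        refine @wb_isOpen (X × Y) (@instTopologicalSpaceProd X Y tX (mtop (primeMetric (m₀ ()) y₀)))
          _ (hC y₀) (hCc y₀) U ?_
        intro q hq g hg
        obtain ⟨V, hV, hVU⟩ := habs q hq
        have hg2 := hconv y₀ q g hg
        have hev := @wb_seq_nbhd (X × Y)
          (@instTopologicalSpaceProd X Y tX (mtop (primeMetric (m₀ ()) q.2)))
          _ (ht2 q.2) (hC q.2) (hCc q.2) q V hV g hg2
        obtain ⟨n, hn⟩ := hev.exists
        exact ⟨n, hVU hn⟩
      letI : TopologicalSpace Y := mtop (m₀ ())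
      rw [isOpen_iff_mem_nhds]
      intro q hq
      rw [← hnds q]
      letI : TopologicalSpace Y := mtop (primeMetric (m₀ ()) q.2)
      exact (hopen q.2).mem_nhds hq



/-- For a Hausdorff space `X`, the product `X × Y` is weakly first countable for
every metrizable `Y` iff it is for every prime metrizable `Y` (metrizable with at
most one non-isolated point). -/
theorem stmt16 {X : Type u} [TopologicalSpace X] [T2Space X] :
    (∀ (Y : Type u) [TopologicalSpace Y], TopologicalSpace.MetrizableSpace Y →
        WeaklyFirstCountable (X × Y)) ↔
    (∀ (Y : Type u) [TopologicalSpace Y], TopologicalSpace.MetrizableSpace Y →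
        ({y : Y | ¬IsOpen ({y} : Set Y)}).Subsingleton →
        WeaklyFirstCountable (X × Y)) := by

  constructor
  · intro h Y tY hmY _
    exact h Y hmY
  · intro h Y tY hmY
    obtain ⟨m, rfl⟩ : ∃ m : MetricSpace Y, mtop m = tY := ⟨TopologicalSpace.metrizableSpaceMetric Y, rfl⟩
    exact key_lemma (fun _ => m) (fun t ht hs => @h Y t ht hs)
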